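/- Assume 0 < G_t(x_t) ≤ g_t for all x_t ∈ 𝒳 and all t. Then the forced-move CPF kernel dominates the CPF kernel in Peskun ordering: for every z_T ∈ 𝒳^{T+1} and every measurable set 𝒜 ⊆ 𝒳^{T+1} with z_T ∉ 𝒜, P^{FM}_T(z_T, 𝒜) ≥ P_T^N(z_T, 𝒜). -/

import Mathlib

open MeasureTheory ProbabilityTheory Filter
open scoped ENNReal Topology

namespace ParticleGibbs

variable {𝒳 : Type*} [MeasurableSpace 𝒳]

/-- Normalised resampling weights `W_t^n`. -/
noncomputable def weight {N : ℕ} (G : 𝒳 → ℝ) (x : Fin N → 𝒳) (n : Fin N) : ℝ :=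
  G (x n) / ∑ j, G (x j)

/-- Unnormalised Feynman–Kac path measure `γ_t` on `𝒳^{t+1}`. -/
noncomputable def fk (m0 : Measure 𝒳) (m : ℕ → Kernel 𝒳 𝒳) (G : ℕ → 𝒳 → ℝ) :
    (t : ℕ) → Measure (Fin (t + 1) → 𝒳)
  | 0 => m0.map fun x => fun _ => x
  | t + 1 =>
      (fk m0 m G t).bind fun z =>
        ENNReal.ofReal (G t (z (Fin.last t))) •
          ((m (t + 1)) (z (Fin.last t))).map fun x => Fin.snoc z x

/-- The Feynman–Kac normalising constant `Z_T`. -/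
noncomputable def fkZ (m0 : Measure 𝒳) (m : ℕ → Kernel 𝒳 𝒳) (G : ℕ → 𝒳 → ℝ) (T : ℕ) : ℝ≥0∞ :=
  fk m0 m G T Set.univ

/-- The normalised Feynman–Kac path measure `Q_T`. -/
noncomputable def fkQ (m0 : Measure 𝒳) (m : ℕ → Kernel 𝒳 𝒳) (G : ℕ → 𝒳 → ℝ) (T : ℕ) :
    Measure (Fin (T + 1) → 𝒳) :=
  (fkZ m0 m G T)⁻¹ • fk m0 m G T

/-- Multinomial selection distribution on labels, with probabilities `W^n`. -/
noncomputable def select {N : ℕ} (G : 𝒳 → ℝ) (x : Fin N → 𝒳) : Measure (Fin N) :=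
  ∑ n : Fin N, ENNReal.ofReal (weight G x n) • Measure.dirac n

/-- Multinomial resampling distribution: the ancestors are i.i.d. draws from `select`. -/
noncomputable def multinomialR {N : ℕ} (G : 𝒳 → ℝ) (x : Fin N → 𝒳) :
    Measure (Fin N → Fin N) :=
  Measure.pi fun _ : Fin N => select G x

/-- The law `θ_T^N` of the interacting particle system (states and ancestor variables). -/
noncomputable def particleLaw (N : ℕ) (m0 : Measure 𝒳) (m : ℕ → Kernel 𝒳 𝒳)
    (R : ℕ → (Fin N → 𝒳) → Measure (Fin N → Fin N)) :
    (t : ℕ) → Measure ((Fin (t + 1) → Fin N → 𝒳) × (Fin t → Fin N → Fin N))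
  | 0 => (Measure.pi fun _ : Fin N => m0).map fun x0 => (fun _ => x0, fun i => i.elim0)
  | t + 1 =>
      (particleLaw N m0 m R t).bind fun p =>
        (R t (p.1 (Fin.last t))).bind fun a =>
          (Measure.pi fun n : Fin N => (m (t + 1)) (p.1 (Fin.last t) (a n))).map fun xnew =>
            (Fin.snoc p.1 xnew, Fin.snoc p.2 a)

/-- Auxiliary backward recursion for ancestral lineages: `ancAux T a n k = B_{T-k}`
where `B_T = n` and `B_t = a_t (B_{t+1})`. -/
def ancAux {N : ℕ} (T : ℕ) (a : Fin T → Fin N → Fin N) (n : Fin N) : ℕ → Fin N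
  | 0 => n
  | k + 1 => if h : T - (k + 1) < T then a ⟨T - (k + 1), h⟩ (ancAux T a n k) else n

/-- The ancestral lineage `B` of the particle with final label `n`. -/
def lineage {N T : ℕ} (a : Fin T → Fin N → Fin N) (n : Fin N) : Fin (T + 1) → Fin N :=
  fun t => ancAux T a n (T - (t : ℕ))

/-- The trajectory `Z_T^n` of the particle with final label `n`. -/
def traj {N T : ℕ} (x : Fin (T + 1) → Fin N → 𝒳) (a : Fin T → Fin N → Fin N) (n : Fin N) :
    Fin (T + 1) → 𝒳 :=
  fun t => x t (lineage a n t)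

/-- The extended target distribution `π_T^N` on particles, ancestors and the selected index. -/
noncomputable def piTN (N : ℕ) (m0 : Measure 𝒳) (m : ℕ → Kernel 𝒳 𝒳) (G : ℕ → 𝒳 → ℝ)
    (R : ℕ → (Fin N → 𝒳) → Measure (Fin N → Fin N)) (T : ℕ) :
    Measure (((Fin (T + 1) → Fin N → 𝒳) × (Fin T → Fin N → Fin N)) × Fin N) :=
  (fkZ m0 m G T)⁻¹ •
    ((particleLaw N m0 m R T).withDensity fun p =>
        ENNReal.ofReal (∏ t : Fin T, (N : ℝ)⁻¹ * ∑ n, G t (p.1 t.castSucc n))).bind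
      fun p =>
        (∑ n : Fin N, ENNReal.ofReal ((N : ℝ)⁻¹ * G T (p.1 (Fin.last T) n)) •
            Measure.dirac n).map fun n => (p, n)

/-- The conditional distribution of the whole ancestor vector given `A^n = m`. -/
noncomputable def condAncestor {N : ℕ} (R : Measure (Fin N → Fin N)) (n m : Fin N) :
    Measure (Fin N → Fin N) :=
  (R {a | a n = m})⁻¹ • R.restrict {a | a n = m}

/-- CPF step 1: the law of the conditional particle system, where at each time `t` the
particle labelled `i t` is frozen at `z t` and the ancestor constraint `A_t^{i(t+1)} = i t`
holds. -/
noncomputable def cpfSystem (N : ℕ) (m0 : Measure 𝒳) (m : ℕ → Kernel 𝒳 𝒳)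
    (R : ℕ → (Fin N → 𝒳) → Measure (Fin N → Fin N)) (z : ℕ → 𝒳) (i : ℕ → Fin N) :
    (t : ℕ) → Measure ((Fin (t + 1) → Fin N → 𝒳) × (Fin t → Fin N → Fin N))
  | 0 => (Measure.pi fun n : Fin N => if n = i 0 then Measure.dirac (z 0) else m0).map
      fun x0 => (fun _ => x0, fun j => j.elim0)
  | t + 1 =>
      (cpfSystem N m0 m R z i t).bind fun p =>
        (condAncestor (R t (p.1 (Fin.last t))) (i (t + 1)) (i t)).bind fun a =>
          (Measure.pi fun n : Fin N =>
              if n = i (t + 1) then Measure.dirac (z (t + 1))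
              else (m (t + 1)) (p.1 (Fin.last t) (a n))).map fun xnew =>
            (Fin.snoc p.1 xnew, Fin.snoc p.2 a)

def extendPath {T : ℕ} (z : Fin (T + 1) → 𝒳) : ℕ → 𝒳 :=
  fun t => z ⟨min t T, Nat.lt_succ_of_le (Nat.min_le_right t T)⟩

def extendIdx {N T : ℕ} (i : Fin (T + 1) → Fin N) : ℕ → Fin N :=
  fun t => i ⟨min t T, Nat.lt_succ_of_le (Nat.min_le_right t T)⟩

/-- The CPF kernel with a general assignment `i` of the frozen ancestry. -/
noncomputable def cpfKernelAux (N : ℕ) (m0 : Measure 𝒳) (m : ℕ → Kernel 𝒳 𝒳)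
    (G : ℕ → 𝒳 → ℝ) (R : ℕ → (Fin N → 𝒳) → Measure (Fin N → Fin N)) (T : ℕ)
    (z : ℕ → 𝒳) (i : ℕ → Fin N) : Measure (Fin (T + 1) → 𝒳) :=
  (cpfSystem N m0 m R z i T).bind fun p =>
    (select (G T) (p.1 (Fin.last T))).bind fun n => Measure.dirac (traj p.1 p.2 n)

/-- The CPF (conditional particle filter / Particle Gibbs) Markov kernel `P_T^N`. -/
noncomputable def cpfKernel (N : ℕ) (m0 : Measure 𝒳) (m : ℕ → Kernel 𝒳 𝒳)
    (G : ℕ → 𝒳 → ℝ) (R : ℕ → (Fin N → 𝒳) → Measure (Fin N → Fin N)) (T : ℕ)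
    (z : Fin (T + 1) → 𝒳) : Measure (Fin (T + 1) → 𝒳) :=
  if hN : 0 < N then cpfKernelAux N m0 m G R T (extendPath z) fun _ => (⟨0, hN⟩ : Fin N)
  else 0

/-- Conditional probability that `A^b = v` given the other components `A^{-b} = a^{-b}`,
relative to a resampling distribution `R`. -/
noncomputable def condPMF {N : ℕ} (R : Measure (Fin N → Fin N)) (b : Fin N)
    (a : Fin N → Fin N) (v : Fin N) : ℝ≥0∞ :=
  R {Function.update a b v} / R {a' | ∀ j, j ≠ b → a' j = a j}

/-- Unnormalised backward-sampling weight of value `v` for `B_t`, given `B_{t+1} = b`. -/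
noncomputable def bsWeight {N T : ℕ} (R : ℕ → (Fin N → 𝒳) → Measure (Fin N → Fin N))
    (dens : ℕ → 𝒳 → 𝒳 → ℝ) (x : Fin (T + 1) → Fin N → 𝒳) (a : Fin T → Fin N → Fin N)
    (t : Fin T) (b v : Fin N) : ℝ≥0∞ :=
  condPMF (R t (x t.castSucc)) b (a t) v *
    ENNReal.ofReal (dens ((t : ℕ) + 1) (x t.castSucc v) (x t.succ b))

/-- One backward-sampling update, redrawing `B_t` given `B_{t+1}`. -/
noncomputable def bsStep {N T : ℕ} (R : ℕ → (Fin N → 𝒳) → Measure (Fin N → Fin N))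
    (dens : ℕ → 𝒳 → 𝒳 → ℝ) (x : Fin (T + 1) → Fin N → 𝒳) (a : Fin T → Fin N → Fin N)
    (t : Fin T) (B : Fin (T + 1) → Fin N) : Measure (Fin (T + 1) → Fin N) :=
  ∑ v : Fin N,
    (bsWeight R dens x a t (B t.succ) v /
        ∑ u : Fin N, bsWeight R dens x a t (B t.succ) u) •
      Measure.dirac (Function.update B t.castSucc v)

/-- The law of the backward-sampled lineage (step CPF-3), started from `B_T = nstar`. -/
noncomputable def bsLaw {N T : ℕ} (R : ℕ → (Fin N → 𝒳) → Measure (Fin N → Fin N))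
    (dens : ℕ → 𝒳 → 𝒳 → ℝ) (x : Fin (T + 1) → Fin N → 𝒳) (a : Fin T → Fin N → Fin N)
    (nstar : Fin N) : Measure (Fin (T + 1) → Fin N) :=
  ((List.finRange T).reverse).foldl (fun μ t => μ.bind (bsStep R dens x a t))
    (Measure.dirac fun _ => nstar)

/-- The CPF-BS kernel with general frozen-ancestry assignment `i`. -/
noncomputable def cpfBSKernelAux (N : ℕ) (m0 : Measure 𝒳) (m : ℕ → Kernel 𝒳 𝒳)
    (G : ℕ → 𝒳 → ℝ) (R : ℕ → (Fin N → 𝒳) → Measure (Fin N → Fin N))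
    (dens : ℕ → 𝒳 → 𝒳 → ℝ) (T : ℕ) (z : ℕ → 𝒳) (i : ℕ → Fin N) :
    Measure (Fin (T + 1) → 𝒳) :=
  (cpfSystem N m0 m R z i T).bind fun p =>
    (select (G T) (p.1 (Fin.last T))).bind fun n =>
      (bsLaw R dens p.1 p.2 n).bind fun B => Measure.dirac fun t => p.1 t (B t)

/-- The CPF-BS (conditional particle filter with backward sampling) kernel `P_T^{N,B}`. -/
noncomputable def cpfBSKernel (N : ℕ) (m0 : Measure 𝒳) (m : ℕ → Kernel 𝒳 𝒳)
    (G : ℕ → 𝒳 → ℝ) (R : ℕ → (Fin N → 𝒳) → Measure (Fin N → Fin N))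
    (dens : ℕ → 𝒳 → 𝒳 → ℝ) (T : ℕ) (z : Fin (T + 1) → 𝒳) :
    Measure (Fin (T + 1) → 𝒳) :=
  if hN : 0 < N then
    cpfBSKernelAux N m0 m G R dens T (extendPath z) fun _ => (⟨0, hN⟩ : Fin N)
  else 0

/-- Partial backward sampling: update at times in `J`, deterministic tracing elsewhere. -/
noncomputable def bsStepJ {N T : ℕ} (J : Finset (Fin T))
    (R : ℕ → (Fin N → 𝒳) → Measure (Fin N → Fin N)) (dens : ℕ → 𝒳 → 𝒳 → ℝ)
    (x : Fin (T + 1) → Fin N → 𝒳) (a : Fin T → Fin N → Fin N) (t : Fin T)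
    (B : Fin (T + 1) → Fin N) : Measure (Fin (T + 1) → Fin N) :=
  if t ∈ J then bsStep R dens x a t B
  else Measure.dirac (Function.update B t.castSucc (a t (B t.succ)))

noncomputable def bsLawJ {N T : ℕ} (J : Finset (Fin T))
    (R : ℕ → (Fin N → 𝒳) → Measure (Fin N → Fin N)) (dens : ℕ → 𝒳 → 𝒳 → ℝ)
    (x : Fin (T + 1) → Fin N → 𝒳) (a : Fin T → Fin N → Fin N) (nstar : Fin N) :
    Measure (Fin (T + 1) → Fin N) :=
  ((List.finRange T).reverse).foldl (fun μ t => μ.bind (bsStepJ J R dens x a t))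
    (Measure.dirac fun _ => nstar)

/-- The CPF kernel regarded as a Markov kernel on the extended space of
trajectories together with their ancestral lineage `(z_T^⋆, b_{0:T-1}^⋆, n^⋆)`. -/
noncomputable def extCPF (N : ℕ) (m0 : Measure 𝒳) (m : ℕ → Kernel 𝒳 𝒳)
    (G : ℕ → 𝒳 → ℝ) (R : ℕ → (Fin N → 𝒳) → Measure (Fin N → Fin N)) (T : ℕ)
    (s : (Fin (T + 1) → 𝒳) × (Fin (T + 1) → Fin N)) :
    Measure ((Fin (T + 1) → 𝒳) × (Fin (T + 1) → Fin N)) :=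
  (cpfSystem N m0 m R (extendPath s.1) (extendIdx s.2) T).bind fun p =>
    (select (G T) (p.1 (Fin.last T))).bind fun n =>
      Measure.dirac (traj p.1 p.2 n, lineage p.2 n)

/-- The CPF-BS(J) kernel (partial backward sampling) on the extended space. -/
noncomputable def extBSJ (N : ℕ) (m0 : Measure 𝒳) (m : ℕ → Kernel 𝒳 𝒳)
    (G : ℕ → 𝒳 → ℝ) (R : ℕ → (Fin N → 𝒳) → Measure (Fin N → Fin N))
    (dens : ℕ → 𝒳 → 𝒳 → ℝ) (T : ℕ) (J : Finset (Fin T))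
    (s : (Fin (T + 1) → 𝒳) × (Fin (T + 1) → Fin N)) :
    Measure ((Fin (T + 1) → 𝒳) × (Fin (T + 1) → Fin N)) :=
  (cpfSystem N m0 m R (extendPath s.1) (extendIdx s.2) T).bind fun p =>
    (select (G T) (p.1 (Fin.last T))).bind fun n =>
      (bsLawJ J R dens p.1 p.2 n).bind fun B =>
        Measure.dirac ((fun t => p.1 t (B t)), B)

/-- The CPF-BS kernel on the extended space. -/
noncomputable def extBS (N : ℕ) (m0 : Measure 𝒳) (m : ℕ → Kernel 𝒳 𝒳)
    (G : ℕ → 𝒳 → ℝ) (R : ℕ → (Fin N → 𝒳) → Measure (Fin N → Fin N))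
    (dens : ℕ → 𝒳 → 𝒳 → ℝ) (T : ℕ)
    (s : (Fin (T + 1) → 𝒳) × (Fin (T + 1) → Fin N)) :
    Measure ((Fin (T + 1) → 𝒳) × (Fin (T + 1) → Fin N)) :=
  extBSJ N m0 m G R dens T Finset.univ s

/-- Uniform distribution on a finite type. -/
noncomputable def uniformFin (α : Type*) [Fintype α] [MeasurableSpace α] : Measure α :=
  (Fintype.card α : ℝ≥0∞)⁻¹ • Measure.count

/-- The stationary law of `(Z_T^⋆, B_{0:T-1}^⋆, N^⋆)`, namely `Q_T ⊗ Uniform`. -/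
noncomputable def extTarget (N : ℕ) (m0 : Measure 𝒳) (m : ℕ → Kernel 𝒳 𝒳)
    (G : ℕ → 𝒳 → ℝ) (T : ℕ) :
    Measure ((Fin (T + 1) → 𝒳) × (Fin (T + 1) → Fin N)) :=
  (fkQ m0 m G T).prod (uniformFin (Fin (T + 1) → Fin N))

/-- `k`-fold iterate of a (measure-valued) Markov kernel. -/
noncomputable def iterateKernel {α : Type*} [MeasurableSpace α] (P : α → Measure α) :
    ℕ → α → Measure α
  | 0, x => Measure.dirac x
  | k + 1, x => (P x).bind (iterateKernel P k)

/-- The law of `(ξ_0, …, ξ_n)` for a Markov chain with initial law `μ` and kernel `P`. -/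
noncomputable def chainLaw {α : Type*} [MeasurableSpace α] (μ : Measure α)
    (P : α → Measure α) : (n : ℕ) → Measure (Fin (n + 1) → α)
  | 0 => μ.map fun z => fun _ => z
  | n + 1 => (chainLaw μ P n).bind fun ξ => (P (ξ (Fin.last n))).map fun z => Fin.snoc ξ z

/-- Forced-move selection probabilities (metropolised Gibbs step on `N^⋆`). -/
noncomputable def fmProb {N : ℕ} (w : Fin N → ℝ) (i0 n : Fin N) : ℝ :=
  if n = i0 then
    1 - ∑ j ∈ Finset.univ.erase i0, w j / (1 - w i0) * min ((1 - w i0) / (1 - w j)) 1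
  else w n / (1 - w i0) * min ((1 - w i0) / (1 - w n)) 1

noncomputable def fmSelect {N : ℕ} (G : 𝒳 → ℝ) (x : Fin N → 𝒳) (i0 : Fin N) :
    Measure (Fin N) :=
  ∑ n : Fin N, ENNReal.ofReal (fmProb (weight G x) i0 n) • Measure.dirac n

/-- The forced-move CPF kernel. -/
noncomputable def fmKernel (N : ℕ) (m0 : Measure 𝒳) (m : ℕ → Kernel 𝒳 𝒳)
    (G : ℕ → 𝒳 → ℝ) (R : ℕ → (Fin N → 𝒳) → Measure (Fin N → Fin N)) (T : ℕ)
    (z : Fin (T + 1) → 𝒳) : Measure (Fin (T + 1) → 𝒳) :=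
  if hN : 0 < N then
    (cpfSystem N m0 m R (extendPath z) (fun _ => (⟨0, hN⟩ : Fin N)) T).bind fun p =>
      (fmSelect (G T) (p.1 (Fin.last T)) ⟨0, hN⟩).bind fun n =>
        Measure.dirac (traj p.1 p.2 n)
  else 0

end ParticleGibbs

namespace ParticleGibbs

variable {𝒳 : Type*} [MeasurableSpace 𝒳]

/-- One step of the coupling of two conditional particle systems.  The state of each
particle is `(Z, Ž, coupled-flag)`; `xf`, `xcf` are the frozen values at the new time. -/
noncomputable def coupleStep (N : ℕ) (m : Kernel 𝒳 𝒳) (G : 𝒳 → ℝ) (xf xcf : 𝒳)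
    (s : Fin N → 𝒳 × 𝒳 × Bool) : Measure (Fin N → 𝒳 × 𝒳 × Bool) :=
  let xiC : ℝ := ∑ j, if (s j).2.2 then G (s j).1 else 0
  let xiCc : ℝ := ∑ j, if (s j).2.2 then 0 else G (s j).1
  let xiCcChk : ℝ := ∑ j, if (s j).2.2 then 0 else G (s j).2.1
  let lam : ℝ := xiC / (xiC + xiCc)
  let lamChk : ℝ := xiC / (xiC + xiCcChk)
  let mu : Measure 𝒳 :=
    ∑ j, (if (s j).2.2 then ENNReal.ofReal (G (s j).1 / xiC) else 0) • m (s j).1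
  let muC : Measure 𝒳 :=
    ∑ j, (if (s j).2.2 then 0 else ENNReal.ofReal (G (s j).1 / xiCc)) • m (s j).1
  let muCChk : Measure 𝒳 :=
    ∑ j, (if (s j).2.2 then 0 else ENNReal.ofReal (G (s j).2.1 / xiCcChk)) • m (s j).2.1
  let nu : Measure 𝒳 :=
    ENNReal.ofReal (|lam - lamChk| / (1 - min lam lamChk)) • mu +
      ENNReal.ofReal ((1 - max lam lamChk) / (1 - min lam lamChk)) • muC
  let nuChk : Measure 𝒳 :=
    ENNReal.ofReal (|lam - lamChk| / (1 - min lam lamChk)) • mu +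
      ENNReal.ofReal ((1 - max lam lamChk) / (1 - min lam lamChk)) • muCChk
  let kap : Measure (𝒳 × 𝒳) := if lam ≤ lamChk then muC.prod nuChk else nu.prod muCChk
  let pair : Measure (𝒳 × 𝒳 × Bool) :=
    ENNReal.ofReal (min lam lamChk) • mu.map (fun y => (y, y, true)) +
      (1 - ENNReal.ofReal (min lam lamChk)) • kap.map (fun q => (q.1, q.2, false))
  Measure.pi fun n : Fin N => if (n : ℕ) = 0 then Measure.dirac (xf, xcf, false) else pair

/-- The law of the coupled pair of conditional particle systems with frozen trajectories
`x` and `xc` (each relabelled as particle `0` of its system). -/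
noncomputable def coupledLaw (N : ℕ) (m0 : Measure 𝒳) (m : ℕ → Kernel 𝒳 𝒳)
    (G : ℕ → 𝒳 → ℝ) (x xc : ℕ → 𝒳) :
    (t : ℕ) → Measure (Fin (t + 1) → Fin N → 𝒳 × 𝒳 × Bool)
  | 0 => (Measure.pi fun n : Fin N =>
        if (n : ℕ) = 0 then Measure.dirac (x 0, xc 0, false)
        else m0.map fun y => (y, y, true)).map fun s0 => fun _ => s0
  | t + 1 => (coupledLaw N m0 m G x xc t).bind fun s =>
      (coupleStep N (m (t + 1)) (G t) (x (t + 1)) (xc (t + 1)) (s (Fin.last t))).map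
        fun snew => Fin.snoc s snew

/-- Number of coupled particles at time `t` of a coupled-system realisation. -/
def coupledCard {N t : ℕ} (ω : Fin (t + 1) → Fin N → 𝒳 × 𝒳 × Bool) (r : Fin (t + 1)) : ℕ :=
  (Finset.univ.filter fun n : Fin N => (ω r n).2.2 = true).card

/-! ### Residual and systematic resampling -/

/-- Integer part `⌊N W^n⌋` of the scaled weights. -/
noncomputable def floorCount (N : ℕ) (W : Fin N → ℝ) (n : Fin N) : ℕ := ⌊(N : ℝ) * W n⌋₊

/-- Residue `r^n = N W^n - ⌊N W^n⌋`. -/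
noncomputable def residue (N : ℕ) (W : Fin N → ℝ) (n : Fin N) : ℝ :=
  (N : ℝ) * W n - floorCount N W n

/-- Number of offspring of label `n` in the ancestor vector `a`. -/
def countLabel {N : ℕ} (a : Fin N → Fin N) (n : Fin N) : ℕ :=
  (Finset.univ.filter fun j => a j = n).card

/-- Number of offspring of label `n` in `a` excluding slot `b`. -/
def countLabelExcept {N : ℕ} (b : Fin N) (a : Fin N → Fin N) (n : Fin N) : ℕ :=
  ((Finset.univ.erase b).filter fun j => a j = n).card

/-- Label occupying slot `j` when stacking `c n` copies of each label `n`, sequentially. -/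
noncomputable def stackLabel (N : ℕ) (hN : 0 < N) (c : Fin N → ℕ) (j : ℕ) : Fin N :=
  if h : (Finset.univ.filter fun n : Fin N => j < ∑ i ∈ Finset.Iic n, c i).Nonempty
  then (Finset.univ.filter fun n : Fin N => j < ∑ i ∈ Finset.Iic n, c i).min' h
  else ⟨0, hN⟩

/-- Residual resampling before the random permutation: the first `∑ ⌊N W^n⌋` slots are
deterministic copies, the remaining slots are i.i.d. draws from the residual multinomial. -/
noncomputable def residualBase (N : ℕ) (W : Fin N → ℝ) : Measure (Fin N → Fin N) :=
  if hN : 0 < N then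
    Measure.pi fun j : Fin N =>
      if (j : ℕ) < ∑ n, floorCount N W n then
        Measure.dirac (stackLabel N hN (floorCount N W) (j : ℕ))
      else ∑ n : Fin N,
        ENNReal.ofReal (residue N W n / ∑ i, residue N W i) • Measure.dirac n
  else 0

/-- Residual resampling followed by a uniformly random permutation of the slots. -/
noncomputable def residualLaw (N : ℕ) (W : Fin N → ℝ) : Measure (Fin N → Fin N) :=
  (Fintype.card (Equiv.Perm (Fin N)) : ℝ≥0∞)⁻¹ •
    ∑ σ : Equiv.Perm (Fin N), (residualBase N W).map fun v => v ∘ σ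

/-- The label produced by systematic resampling for cursor position `u + n`:
the unique `m` with `S(m-1) ≤ u + n < S(m)`. -/
noncomputable def sysLabel (N : ℕ) (hN : 0 < N) (W : Fin N → ℝ) (u : ℝ) (n : Fin N) :
    Fin N :=
  if h : (Finset.univ.filter fun m : Fin N =>
      u + (n : ℝ) < (N : ℝ) * ∑ j ∈ Finset.Iic m, W j).Nonempty
  then (Finset.univ.filter fun m : Fin N =>
      u + (n : ℝ) < (N : ℝ) * ∑ j ∈ Finset.Iic m, W j).min' h
  else ⟨0, hN⟩

/-- Systematic resampling with cycle randomisation: `U ~ Uniform[0,1)`, a uniformly random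
`N`-cycle `c(n) = n + k`, and `A^n = Ā^{c(n)} = sysLabel U (n + k)`. -/
noncomputable def systematicLaw (N : ℕ) (W : Fin N → ℝ) : Measure (Fin N → Fin N) :=
  if hN : 0 < N then
    (N : ℝ≥0∞)⁻¹ • ∑ k : Fin N,
      ((volume : Measure ℝ).restrict (Set.Ico (0 : ℝ) 1)).map
        fun u => fun n : Fin N => sysLabel N hN W u (n + k)
  else 0

end ParticleGibbs


namespace ParticleGibbs

variable {𝒳 : Type*} [MetricSpace 𝒳] [CompleteSpace 𝒳] [TopologicalSpace.SeparableSpace 𝒳]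
  [MeasurableSpace 𝒳] [BorelSpace 𝒳]

/-! ### Auxiliary lemmas for the Peskun domination theorem -/

section Aux

variable {𝒳 : Type*} [MeasurableSpace 𝒳]

lemma bind_null {α β : Type*} [MeasurableSpace α] [MeasurableSpace β]
    {μ : Measure α} {f : α → Measure β} {s : Set β} (hs : MeasurableSet s)
    (h : ∀ᵐ a ∂μ, f a s = 0) : μ.bind f s = 0 := by
  by_cases hf : AEMeasurable f μ
  · rw [Measure.bind, Measure.map_congr hf.ae_eq_mk, Measure.join_apply hs,
      lintegral_map (Measure.measurable_coe hs) hf.measurable_mk]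
    have h2 : ∀ᵐ a ∂μ, (hf.mk f a) s = 0 := by
      filter_upwards [h, hf.ae_eq_mk] with a h1 h2
      rw [← h2]; exact h1
    calc ∫⁻ a, (hf.mk f a) s ∂μ = ∫⁻ _, 0 ∂μ := lintegral_congr_ae h2
      _ = 0 := lintegral_zero
  · rw [Measure.bind, Measure.map_of_not_aemeasurable hf, Measure.join_zero]
    rfl

lemma measurable_eval_pair {β : Type*} [MeasurableSpace β] {N : ℕ} :
    Measurable fun q : (Fin N → β) × Fin N => q.1 q.2 := by
  intro s hs
  have : (fun q : (Fin N → β) × Fin N => q.1 q.2) ⁻¹' s =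
      ⋃ j : Fin N, {q : (Fin N → β) × Fin N | q.2 = j} ∩ {q | q.1 j ∈ s} := by
    ext q
    simp only [Set.mem_preimage, Set.mem_iUnion, Set.mem_inter_iff, Set.mem_setOf_eq]
    constructor
    · intro hq; exact ⟨q.2, rfl, hq⟩
    · rintro ⟨j, rfl, hq⟩; exact hq
  rw [this]
  exact MeasurableSet.iUnion fun j =>
    (measurable_snd (measurableSet_singleton j)).inter
      (((measurable_pi_apply j).comp measurable_fst) hs)

lemma pi_coord_null {β : Type*} [MeasurableSpace β] {N : ℕ} (κ : Fin N → Measure β)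
    [∀ n, SigmaFinite (κ n)] (i0 : Fin N) {s : Set β}
    (h0 : κ i0 s = 0) : Measure.pi κ {x | x i0 ∈ s} = 0 := by
  have hset : {x : Fin N → β | x i0 ∈ s} =
      Set.pi Set.univ (fun n => if n = i0 then s else Set.univ) := by
    ext x
    simp only [Set.mem_setOf_eq, Set.mem_pi, Set.mem_univ, forall_true_left]
    constructor
    · intro hx n
      by_cases h : n = i0
      · subst h; simp [hx]
      · simp [h]
    · intro hx
      have := hx i0
      simpa using this
  rw [hset, Measure.pi_pi]
  exact Finset.prod_eq_zero (Finset.mem_univ i0) (by simp [h0])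

lemma sum_smul_dirac_bind_apply {β : Type*} [MeasurableSpace β] {N : ℕ}
    (c : Fin N → ℝ≥0∞) (h : Fin N → β) {s : Set β} (hs : MeasurableSet s) :
    ((∑ n : Fin N, c n • Measure.dirac n).bind fun n => Measure.dirac (h n)) s =
      ∑ n : Fin N, c n * s.indicator 1 (h n) := by
  rw [Measure.bind_apply hs (measurable_of_countable _).aemeasurable, lintegral_finset_sum_measure]
  refine Finset.sum_congr rfl fun n _ => ?_
  rw [lintegral_smul_measure, lintegral_dirac' _ (measurable_of_countable _),
    Measure.dirac_apply' _ hs, smul_eq_mul]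

lemma ancAux_const {N T : ℕ} {a : Fin T → Fin N → Fin N} {i0 : Fin N}
    (ha : ∀ s, a s i0 = i0) : ∀ k, ancAux T a i0 k = i0 := by
  intro k
  induction k with
  | zero => rfl
  | succ k ih =>
    rw [ancAux]
    split
    · rw [ih, ha]
    · rfl

lemma weight_pos_lt_one {N : ℕ} (hN : 2 ≤ N) (G : 𝒳 → ℝ) (hG : ∀ y, 0 < G y)
    (x : Fin N → 𝒳) (n : Fin N) : 0 < weight G x n ∧ weight G x n < 1 := by
  haveI : Nontrivial (Fin N) := Fin.nontrivial_iff_two_le.mpr hN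
  have hSpos : 0 < ∑ k, G (x k) :=
    Finset.sum_pos (fun k _ => hG _) ⟨n, Finset.mem_univ n⟩
  have hS : G (x n) < ∑ k, G (x k) := by
    obtain ⟨j', hj'⟩ := exists_ne n
    exact Finset.single_lt_sum hj' (Finset.mem_univ n) (Finset.mem_univ j') (hG _)
      (fun k _ _ => (hG _).le)
  unfold weight
  exact ⟨div_pos (hG _) hSpos, (div_lt_one hSpos).2 hS⟩

lemma weight_le_fmProb {N : ℕ} {w : Fin N → ℝ} (hw : ∀ j, 0 < w j)
    (hw1 : ∀ j, w j < 1) {i0 n : Fin N} (hn : n ≠ i0) : w n ≤ fmProb w i0 n := by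
  rw [fmProb, if_neg hn]
  set a := 1 - w i0 with ha_def
  set b := 1 - w n with hb_def
  have ha : 0 < a := by simp [ha_def, hw1 i0]
  have ha1 : a ≤ 1 := by simp [ha_def]; exact (hw i0).le
  have hb : 0 < b := by simp [hb_def, hw1 n]
  have hb1 : b ≤ 1 := by simp [hb_def]; exact (hw n).le
  rcases le_or_gt a b with hab | hab
  · have hmin : min (a / b) 1 = a / b := min_eq_left ((div_le_one hb).2 hab)
    rw [hmin, div_mul_div_comm, mul_comm (w n) a, mul_div_mul_left _ _ ha.ne']
    rw [le_div_iff₀ hb]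
    exact mul_le_of_le_one_right (hw n).le hb1
  · have hmin : min (a / b) 1 = 1 := min_eq_right ((one_le_div hb).2 hab.le)
    rw [hmin, mul_one, le_div_iff₀ ha]
    exact mul_le_of_le_one_right (hw n).le ha1

end Aux

section Aux2

variable {𝒳 : Type*} [MeasurableSpace 𝒳] [MeasurableSingletonClass 𝒳]

lemma ae_frozen (N : ℕ) (m0 : Measure 𝒳) (hm0 : IsProbabilityMeasure m0)
    (m : ℕ → Kernel 𝒳 𝒳) (hm : ∀ t, IsMarkovKernel (m t))
    (R : ℕ → (Fin N → 𝒳) → Measure (Fin N → Fin N)) (z' : ℕ → 𝒳) (i0 : Fin N) :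
    ∀ t, ∀ᵐ p ∂ cpfSystem N m0 m R z' (fun _ => i0) t,
      (∀ r : Fin (t + 1), p.1 r i0 = z' r) ∧ ∀ s : Fin t, p.2 s i0 = i0 := by
  have hGoodMeas : ∀ t : ℕ, MeasurableSet
      {p : (Fin (t + 1) → Fin N → 𝒳) × (Fin t → Fin N → Fin N) |
        (∀ r : Fin (t + 1), p.1 r i0 = z' r) ∧ ∀ s : Fin t, p.2 s i0 = i0} := by
    intro t
    have h1 : MeasurableSet {p : (Fin (t + 1) → Fin N → 𝒳) × (Fin t → Fin N → Fin N) |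
        ∀ r : Fin (t + 1), p.1 r i0 = z' r} := by
      have : {p : (Fin (t + 1) → Fin N → 𝒳) × (Fin t → Fin N → Fin N) |
          ∀ r : Fin (t + 1), p.1 r i0 = z' r} =
          ⋂ r : Fin (t + 1), (fun p : (Fin (t + 1) → Fin N → 𝒳) × (Fin t → Fin N → Fin N)
            => p.1 r i0) ⁻¹' {z' (r : ℕ)} := by
        ext p; simp [Set.mem_iInter]
      rw [this]
      exact MeasurableSet.iInter fun r =>
        ((measurable_pi_apply i0).comp ((measurable_pi_apply r).comp measurable_fst))
          (measurableSet_singleton _)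
    have h2 : MeasurableSet {p : (Fin (t + 1) → Fin N → 𝒳) × (Fin t → Fin N → Fin N) |
        ∀ s : Fin t, p.2 s i0 = i0} := by
      have : {p : (Fin (t + 1) → Fin N → 𝒳) × (Fin t → Fin N → Fin N) |
          ∀ s : Fin t, p.2 s i0 = i0} =
          Prod.snd ⁻¹' {a : Fin t → Fin N → Fin N | ∀ s, a s i0 = i0} := rfl
      rw [this]
      exact measurable_snd (Set.to_countable _).measurableSet
    exact h1.inter h2
  intro t
  induction t with
  | zero =>
    rw [ae_iff, ← Set.compl_setOf]
    have hmap : Measurable fun x0 : Fin N → 𝒳 =>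
        ((fun _ => x0, fun j => j.elim0) :
          (Fin 1 → Fin N → 𝒳) × (Fin 0 → Fin N → Fin N)) :=
      (measurable_pi_lambda _ fun _ => measurable_id).prodMk measurable_const
    rw [cpfSystem, Measure.map_apply hmap ((hGoodMeas 0).compl)]
    set κ0 : Fin N → Measure 𝒳 :=
      fun n => if n = (fun _ : ℕ => i0) 0 then Measure.dirac (z' 0) else m0 with hκ0
    haveI : ∀ n, SigmaFinite (κ0 n) := by
      intro n
      rw [hκ0]
      dsimp only
      split <;> infer_instance
    refine measure_mono_null (fun x0 hx0 => ?_)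
      (pi_coord_null κ0 i0 (s := {z' 0}ᶜ) ?_)
    · simp only [Set.mem_preimage, Set.mem_compl_iff, Set.mem_setOf_eq] at hx0 ⊢
      intro hx
      apply hx0
      refine ⟨fun r => ?_, fun s => s.elim0⟩
      have : (r : ℕ) = 0 := Nat.lt_one_iff.mp r.isLt
      rw [this]
      exact hx
    · have : κ0 i0 = Measure.dirac (z' 0) := by rw [hκ0]; simp
      rw [this, Measure.dirac_apply' _ (measurableSet_singleton _).compl]
      simp
  | succ t ih =>
    rw [ae_iff, ← Set.compl_setOf]
    rw [cpfSystem]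
    refine bind_null ((hGoodMeas (t + 1)).compl) ?_
    filter_upwards [ih] with p hp
    refine bind_null ((hGoodMeas (t + 1)).compl) ?_
    have hcond : ∀ᵐ a ∂ condAncestor
        (R t (p.1 (Fin.last t))) ((fun _ : ℕ => i0) (t + 1)) ((fun _ : ℕ => i0) t),
        a i0 = i0 := by
      rw [ae_iff]
      rw [condAncestor, Measure.smul_apply,
        Measure.restrict_apply (Set.to_countable _).measurableSet]
      have : {a : Fin N → Fin N | ¬ a i0 = i0} ∩ {a | a i0 = i0} = ∅ := by
        ext a; simp only [Set.mem_inter_iff, Set.mem_setOf_eq, Set.mem_empty_iff_false]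
        tauto
      rw [this]
      simp
    filter_upwards [hcond] with a ha
    have hmap : Measurable fun xnew : Fin N → 𝒳 =>
        ((Fin.snoc p.1 xnew, Fin.snoc p.2 a) :
          (Fin (t + 2) → Fin N → 𝒳) × (Fin (t + 1) → Fin N → Fin N)) := by
      refine Measurable.prodMk ?_ measurable_const
      refine measurable_pi_lambda _ fun r => ?_
      induction r using Fin.lastCases with
      | last => simpa [Fin.snoc_last] using measurable_id'
      | cast r => simp only [Fin.snoc_castSucc]; exact measurable_const
    rw [Measure.map_apply hmap ((hGoodMeas (t + 1)).compl)]
    set κ : Fin N → Measure 𝒳 := fun n =>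
      if n = (fun _ : ℕ => i0) (t + 1) then Measure.dirac (z' (t + 1))
      else (m (t + 1)) (p.1 (Fin.last t) (a n)) with hκ
    haveI : ∀ n, SigmaFinite (κ n) := by
      intro n
      haveI := hm (t + 1)
      rw [hκ]
      dsimp only
      split <;> infer_instance
    refine measure_mono_null (fun xnew hx => ?_)
      (pi_coord_null κ i0 (s := {z' (t + 1)}ᶜ) ?_)
    · simp only [Set.mem_preimage, Set.mem_compl_iff, Set.mem_setOf_eq] at hx ⊢
      intro hxz
      apply hx
      constructor
      · intro r
        induction r using Fin.lastCases with
        | last => simpa [Fin.snoc_last, Fin.val_last] using hxz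
        | cast r =>
          rw [Fin.snoc_castSucc, Fin.coe_castSucc]
          exact hp.1 r
      · intro s
        induction s using Fin.lastCases with
        | last => rw [Fin.snoc_last]; exact ha
        | cast s => rw [Fin.snoc_castSucc]; exact hp.2 s
    · have : κ i0 = Measure.dirac (z' (t + 1)) := by rw [hκ]; simp
      rw [this, Measure.dirac_apply' _ (measurableSet_singleton _).compl]
      simp

end Aux2

/-- Assuming the potentials are strictly positive and bounded, the forced-move CPF
kernel dominates the CPF kernel in Peskun ordering: for every `z_T` and measurable `𝒜`
with `z_T ∉ 𝒜`, `P^{FM}_T(z_T, 𝒜) ≥ P_T^N(z_T, 𝒜)`. -/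
theorem forced_move_peskun_dominates
    (T : ℕ) (hT : 1 ≤ T) (N : ℕ) (hN : 2 ≤ N)
    (m0 : Measure 𝒳) (hm0 : IsProbabilityMeasure m0)
    (m : ℕ → Kernel 𝒳 𝒳) (hm : ∀ t, IsMarkovKernel (m t))
    (G : ℕ → 𝒳 → ℝ) (hGmeas : ∀ t, Measurable (G t))
    (hGpos : ∀ t x, 0 < G t x)
    (g : ℕ → ℝ) (hGle : ∀ t x, G t x ≤ g t)
    (R : ℕ → (Fin N → 𝒳) → Measure (Fin N → Fin N))
    (hRprob : ∀ t x, IsProbabilityMeasure (R t x))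
    (hRmeas : ∀ t (s : Set (Fin N → Fin N)), MeasurableSet s → Measurable fun x => R t x s)
    (hRa : ∀ t (x : Fin N → 𝒳) (n j : Fin N),
      R t x {a | a n = j} = ENNReal.ofReal (weight (G t) x j))
    (hRb1 : ∀ t (x : Fin N → 𝒳) (k : Fin N),
      (R t x).map (fun a => fun n => a (n + k)) = R t x)
    (hRb2 : ∀ t (x : Fin N → 𝒳) (k : Fin N),
      (R t x).map (fun a => fun n => a n - k) = R t fun n => x (n + k)) :
    ∀ (z : Fin (T + 1) → 𝒳) (A : Set (Fin (T + 1) → 𝒳)), MeasurableSet A → z ∉ A →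
      cpfKernel N m0 m G R T z A ≤ fmKernel N m0 m G R T z A := by
  intro z A hA hzA
  have hN0 : 0 < N := lt_of_lt_of_le two_pos hN
  rw [cpfKernel, fmKernel, dif_pos hN0, dif_pos hN0, cpfKernelAux]
  set i0 : Fin N := ⟨0, hN0⟩ with hi0
  -- measurability helpers
  have hev : ∀ (t : Fin (T + 1)) (n : Fin N),
      Measurable fun p : (Fin (T + 1) → Fin N → 𝒳) × (Fin T → Fin N → Fin N) =>
        p.1 t n :=
    fun t n => (measurable_pi_apply n).comp ((measurable_pi_apply t).comp measurable_fst)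
  have hW : ∀ n : Fin N,
      Measurable fun p : (Fin (T + 1) → Fin N → 𝒳) × (Fin T → Fin N → Fin N) =>
        weight (G T) (p.1 (Fin.last T)) n := by
    intro n
    unfold weight
    exact ((hGmeas T).comp (hev _ n)).div
      (Finset.measurable_sum _ fun j _ => (hGmeas T).comp (hev _ j))
  have htraj : ∀ n : Fin N,
      Measurable fun p : (Fin (T + 1) → Fin N → 𝒳) × (Fin T → Fin N → Fin N) =>
        traj p.1 p.2 n := by
    intro n
    refine measurable_pi_lambda _ fun t => ?_
    show Measurable fun p : (Fin (T + 1) → Fin N → 𝒳) × (Fin T → Fin N → Fin N) =>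
      p.1 t (lineage p.2 n t)
    have h1 : Measurable fun p : (Fin (T + 1) → Fin N → 𝒳) × (Fin T → Fin N → Fin N) =>
        ((p.1 t, lineage p.2 n t) : (Fin N → 𝒳) × Fin N) :=
      Measurable.prodMk ((measurable_pi_apply t).comp measurable_fst)
        ((measurable_of_countable (fun a => lineage a n t)).comp measurable_snd)
    exact measurable_eval_pair.comp h1
  have hfmProb : ∀ n : Fin N,
      Measurable fun p : (Fin (T + 1) → Fin N → 𝒳) × (Fin T → Fin N → Fin N) =>
        fmProb (weight (G T) (p.1 (Fin.last T))) i0 n := by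
    intro n
    unfold fmProb
    by_cases h : n = i0
    · simp only [if_pos h]
      refine measurable_const.sub (Finset.measurable_sum _ fun j _ => ?_)
      exact ((hW j).div (measurable_const.sub (hW i0))).mul
        (((measurable_const.sub (hW i0)).div (measurable_const.sub (hW j))).min
          measurable_const)
    · simp only [if_neg h]
      exact ((hW n).div (measurable_const.sub (hW i0))).mul
        (((measurable_const.sub (hW i0)).div (measurable_const.sub (hW n))).min
          measurable_const)
  have hΦ : Measurable fun p : (Fin (T + 1) → Fin N → 𝒳) × (Fin T → Fin N → Fin N) =>
      (select (G T) (p.1 (Fin.last T))).bind fun n => Measure.dirac (traj p.1 p.2 n) := by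
    refine Measure.measurable_of_measurable_coe _ fun s hs => ?_
    have key : ∀ p : (Fin (T + 1) → Fin N → 𝒳) × (Fin T → Fin N → Fin N),
        ((select (G T) (p.1 (Fin.last T))).bind fun n => Measure.dirac (traj p.1 p.2 n)) s
        = ∑ n : Fin N, ENNReal.ofReal (weight (G T) (p.1 (Fin.last T)) n) *
            s.indicator 1 (traj p.1 p.2 n) := by
      intro p
      rw [select]
      exact sum_smul_dirac_bind_apply _ _ hs
    simp only [key]
    exact Finset.measurable_sum _ fun n _ =>
      (ENNReal.measurable_ofReal.comp (hW n)).mul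
        ((measurable_one.indicator hs).comp (htraj n))
  have hΨ : Measurable fun p : (Fin (T + 1) → Fin N → 𝒳) × (Fin T → Fin N → Fin N) =>
      (fmSelect (G T) (p.1 (Fin.last T)) i0).bind fun n =>
        Measure.dirac (traj p.1 p.2 n) := by
    refine Measure.measurable_of_measurable_coe _ fun s hs => ?_
    have key : ∀ p : (Fin (T + 1) → Fin N → 𝒳) × (Fin T → Fin N → Fin N),
        ((fmSelect (G T) (p.1 (Fin.last T)) i0).bind fun n =>
          Measure.dirac (traj p.1 p.2 n)) s
        = ∑ n : Fin N, ENNReal.ofReal (fmProb (weight (G T) (p.1 (Fin.last T))) i0 n) *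
            s.indicator 1 (traj p.1 p.2 n) := by
      intro p
      rw [fmSelect]
      exact sum_smul_dirac_bind_apply _ _ hs
    simp only [key]
    exact Finset.measurable_sum _ fun n _ =>
      (ENNReal.measurable_ofReal.comp (hfmProb n)).mul
        ((measurable_one.indicator hs).comp (htraj n))
  rw [Measure.bind_apply hA hΦ.aemeasurable, Measure.bind_apply hA hΨ.aemeasurable]
  refine lintegral_mono_ae ?_
  filter_upwards [ae_frozen N m0 hm0 m hm R (extendPath z) i0 T] with p hp
  have hz : traj p.1 p.2 i0 = z := by
    funext t
    show p.1 t (lineage p.2 i0 t) = z t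
    have hl : lineage p.2 i0 t = i0 := ancAux_const hp.2 _
    rw [hl, hp.1 t]
    show z ⟨min (t : ℕ) T, _⟩ = z t
    congr 1
    exact Fin.ext (by simp [Nat.min_eq_left (Nat.lt_succ_iff.mp t.isLt)])
  have e1 : ((select (G T) (p.1 (Fin.last T))).bind fun n =>
        Measure.dirac (traj p.1 p.2 n)) A
      = ∑ n : Fin N, ENNReal.ofReal (weight (G T) (p.1 (Fin.last T)) n) *
          A.indicator 1 (traj p.1 p.2 n) := by
    rw [select]; exact sum_smul_dirac_bind_apply _ _ hA
  have e2 : ((fmSelect (G T) (p.1 (Fin.last T)) i0).bind fun n =>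
        Measure.dirac (traj p.1 p.2 n)) A
      = ∑ n : Fin N, ENNReal.ofReal (fmProb (weight (G T) (p.1 (Fin.last T))) i0 n) *
          A.indicator 1 (traj p.1 p.2 n) := by
    rw [fmSelect]; exact sum_smul_dirac_bind_apply _ _ hA
  rw [e1, e2]
  refine Finset.sum_le_sum fun n _ => ?_
  by_cases hn : n = i0
  · subst hn
    rw [hz, Set.indicator_of_notMem hzA, mul_zero]
    exact zero_le
  · have hwb := weight_pos_lt_one hN (G T) (hGpos T) (p.1 (Fin.last T))
    exact mul_le_mul_left
      (ENNReal.ofReal_le_ofReal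
        (weight_le_fmProb (fun j => (hwb j).1) (fun j => (hwb j).2) hn)) _

end ParticleGibbs
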